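/- Let s, q ∈ ℝ^{n} with sₙ ≥ 0, and let q̃ ∈ ℝ^{n+1} satisfy q̃ᵢ = qᵢ for i ≤ n−1, q̃ₙ² + q̃_{n+1}² = qₙ², and q̃_{n+1} ≥ 0. Let ŝ ∈ ℝ^{n+1} be s extended by a zero coordinate. Then ‖s − q‖₂ ≤ ‖ŝ − q̃‖₂ ≤ √(Σ_{i=1}^{n−1}(sᵢ−qᵢ)² + (sₙ+qₙ)²). -/
import Mathlib

/-- The n-simplex lower and upper bounds on the true embedded distance.
`a`, `b` are the first n−1 coordinates of s and q, `sn`, `qn` their last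
(altitude) coordinates; `qtn`, `qtn1` are the last two coordinates of the true
embedding q̃ of q in ℝ^{n+1}, with q̃ₙ² + q̃_{n+1}² = qₙ² and q̃_{n+1} ≥ 0;
ŝ = (s, 0). -/
theorem true_distance_bounds (k : ℕ) (a b : Fin k → ℝ) (sn qn qtn qtn1 : ℝ)
    (hsn : 0 ≤ sn) (hqn : 0 ≤ qn) (hqt : qtn^2 + qtn1^2 = qn^2)
    (hqtn1 : 0 ≤ qtn1) :
    Real.sqrt (∑ i : Fin k, (a i - b i)^2 + (sn - qn)^2) ≤
        Real.sqrt (∑ i : Fin k, (a i - b i)^2 + (sn - qtn)^2 + (0 - qtn1)^2) ∧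
      Real.sqrt (∑ i : Fin k, (a i - b i)^2 + (sn - qtn)^2 + (0 - qtn1)^2) ≤
        Real.sqrt (∑ i : Fin k, (a i - b i)^2 + (sn + qn)^2) := by
  have h1 : qtn ≤ qn := by nlinarith [sq_nonneg qtn1, sq_nonneg (qn - qtn), sq_nonneg (qn + qtn)]
  have h2 : -qn ≤ qtn := by nlinarith [sq_nonneg qtn1, sq_nonneg (qn - qtn), sq_nonneg (qn + qtn)]
  constructor
  · apply Real.sqrt_le_sqrt
    nlinarith [mul_nonneg hsn (sub_nonneg.2 h1)]
  · apply Real.sqrt_le_sqrt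
    nlinarith [mul_nonneg hsn (by linarith : (0:ℝ) ≤ qn + qtn)]
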